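/- There exists a finite constant C such that for every x in the open unit disc D₀ and every ε ∈ (0,1], ε^{−2}·∫_{{y : 1−ε < |y| < 1}} G₀(x,y) dy ≤ C, where the integral is with respect to two-dimensional Lebesgue measure. -/

import Mathlib

open MeasureTheory

/-- The Green function of the unit disc, identifying `ℝ²` with `ℂ`. -/
noncomputable def greenKernel (x y : ℂ) : ℝ :=
  (1 / (2 * Real.pi)) * Real.log (‖1 - (starRingEnd ℂ x) * y‖ / ‖x - y‖)

section Auxiliary

open Set Metric intervalIntegral Real




lemma slit_aux {c z : ℂ} (hc : ‖c‖ < 1) (hz : ‖z‖ ≤ 1) : 1 - c * z ∈ Complex.slitPlane := by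
  left
  have h1 : ‖c * z‖ < 1 := by
    calc ‖c * z‖ = ‖c‖ * ‖z‖ := norm_mul _ _
    _ ≤ ‖c‖ * 1 := by nlinarith [norm_nonneg c, norm_nonneg z]
    _ < 1 := by simpa using hc
  have h2 : (c * z).re ≤ ‖c * z‖ := Complex.re_le_norm _
  simp only [Complex.sub_re, Complex.one_re]
  linarith

lemma cont_log_one_sub {c : ℂ} (hc : ‖c‖ < 1) :
    Continuous fun θ : ℝ => Complex.log (1 - c * Complex.exp (θ * Complex.I)) := by
  rw [continuous_iff_continuousAt]
  intro θ
  have h1 : Continuous fun θ : ℝ => 1 - c * Complex.exp (θ * Complex.I) := by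
    continuity
  exact h1.continuousAt.clog (slit_aux hc (le_of_eq (Complex.norm_exp_ofReal_mul_I θ)))

lemma keyK_interval {c : ℂ} (hc : ‖c‖ < 1) :
    ∫ θ in (0:ℝ)..(2*π), Real.log ‖1 - c * Complex.exp (θ * Complex.I)‖ = 0 := by
  set f : ℂ → ℂ := fun z => Complex.log (1 - c * z) with hf
  have hdiff : ∀ z ∈ closedBall (0:ℂ) 1, DifferentiableAt ℂ f z := by
    intro z hz
    have hz1 : ‖z‖ ≤ 1 := by simpa using mem_closedBall_zero_iff.1 hz
    exact ((differentiableAt_const _).sub ((differentiableAt_const c).mul differentiableAt_id)).clog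
      (slit_aux hc hz1)
  have hdc : DiffContOnCl ℂ f (ball (0:ℂ) 1) := by
    apply DifferentiableOn.diffContOnCl
    rw [closure_ball (0:ℂ) one_ne_zero]
    exact fun z hz => (hdiff z hz).differentiableWithinAt
  have key := hdc.circleIntegral_sub_inv_smul (mem_ball_self one_pos)
  have hf0 : f 0 = 0 := by simp [hf]
  rw [hf0, smul_zero] at key
  -- unfold circle integral
  have hunfold : (∮ z in C((0:ℂ), 1), (z - 0)⁻¹ • f z)
      = ∫ θ in (0:ℝ)..(2*π), Complex.I * f (Complex.exp (θ * Complex.I)) := by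
    simp only [circleIntegral, deriv_circleMap, circleMap, Complex.ofReal_one, one_mul, zero_add,
      sub_zero, smul_eq_mul]
    congr 1
    ext θ
    have : Complex.exp (θ * Complex.I) ≠ 0 := Complex.exp_ne_zero _
    field_simp
  rw [hunfold] at key
  rw [intervalIntegral.integral_const_mul] at key
  have hint : ∫ θ in (0:ℝ)..(2*π), f (Complex.exp (θ * Complex.I)) = 0 := by
    exact (mul_eq_zero.mp key).resolve_left Complex.I_ne_zero
  -- take real parts
  have hcont := cont_log_one_sub hc
  have hInt : IntegrableOn (fun θ : ℝ => Complex.log (1 - c * Complex.exp (θ * Complex.I)))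
      (Ioc 0 (2*π)) := ((hcont.intervalIntegrable 0 (2*π)).1)
  have h2π : (0:ℝ) ≤ 2*π := by positivity
  rw [intervalIntegral.integral_of_le h2π] at hint
  have hre := integral_re (𝕜 := ℂ) hInt
  rw [intervalIntegral.integral_of_le h2π]
  have heq : ∀ θ : ℝ, Real.log ‖1 - c * Complex.exp (θ * Complex.I)‖
      = (Complex.log (1 - c * Complex.exp (θ * Complex.I))).re := by
    intro θ; rw [Complex.log_re]
  calc ∫ θ in Ioc (0:ℝ) (2*π), Real.log ‖1 - c * Complex.exp (θ * Complex.I)‖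
      = ∫ θ in Ioc (0:ℝ) (2*π), (Complex.log (1 - c * Complex.exp (θ * Complex.I))).re := by
        simp_rw [heq]
    _ = (∫ θ in Ioc (0:ℝ) (2*π), Complex.log (1 - c * Complex.exp (θ * Complex.I))).re := hre
    _ = 0 := by rw [hint]; rfl

lemma keyK_pi {c : ℂ} (hc : ‖c‖ < 1) :
    ∫ θ in (-π)..π, Real.log ‖1 - c * Complex.exp (θ * Complex.I)‖ = 0 := by
  have hper : Function.Periodic (fun θ : ℝ => Real.log ‖1 - c * Complex.exp (θ * Complex.I)‖)
      (2*π) := by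
    intro θ
    simp only [Complex.ofReal_add, Complex.ofReal_mul, Complex.ofReal_ofNat]
    rw [add_mul, Complex.exp_add, Complex.exp_two_pi_mul_I, mul_one]
  have h1 := hper.intervalIntegral_add_eq (-π) 0
  have hpi : -π + 2*π = π := by ring
  rw [hpi, zero_add] at h1
  rw [h1, keyK_interval hc]

lemma polar_symm_eq (p : ℝ × ℝ) :
    Complex.polarCoord.symm p = Complex.measurableEquivRealProd.symm (polarCoord.symm p) := by
  rw [Complex.measurableEquivRealProd_symm_apply]
  simp only [Complex.polarCoord_symm_apply, polarCoord_symm_apply]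
  rw [Complex.ext_iff]
  constructor <;> simp [Complex.ofReal_cos, Complex.ofReal_sin] <;> ring_nf <;>
    simp [Complex.cos_ofReal_re, Complex.sin_ofReal_re]

lemma integrableOn_polar_comp {f : ℂ → ℝ} (hf : Integrable f) :
    IntegrableOn (fun p : ℝ × ℝ => p.1 • f (Complex.polarCoord.symm p)) polarCoord.target := by
  set B : ℝ × ℝ → ℝ × ℝ →L[ℝ] ℝ × ℝ := fun p =>
    LinearMap.toContinuousLinearMap (Matrix.toLin (Module.Basis.finTwoProd ℝ) (Module.Basis.finTwoProd ℝ)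
      !![Real.cos p.2, -p.1 * Real.sin p.2; Real.sin p.2, p.1 * Real.cos p.2]) with hB
  have B_det : ∀ p, (B p).det = p.1 := by
    intro p
    conv_rhs => rw [← one_mul p.1, ← Real.cos_sq_add_sin_sq p.2]
    simp only [hB, neg_mul, LinearMap.det_toContinuousLinearMap, LinearMap.det_toLin,
      Matrix.det_fin_two_of, sub_neg_eq_add]
    ring
  set g : ℝ × ℝ → ℝ := fun q => f (Complex.measurableEquivRealProd.symm q) with hg
  have hg_int : Integrable g :=
    ((Complex.volume_preserving_equiv_real_prod.symm).integrable_comp_emb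
      Complex.measurableEquivRealProd.symm.measurableEmbedding).mpr hf
  have hs : MeasurableSet polarCoord.target := polarCoord.open_target.measurableSet
  have hinj : Set.InjOn polarCoord.symm polarCoord.target := by
    have h := OpenPartialHomeomorph.injOn polarCoord.symm
    rwa [OpenPartialHomeomorph.symm_source] at h
  have hder : ∀ p ∈ polarCoord.target, HasFDerivWithinAt polarCoord.symm (B p) polarCoord.target p :=
    fun p _ => (hasFDerivAt_polarCoord_symm p).hasFDerivWithinAt
  have h2 : IntegrableOn g (polarCoord.symm '' polarCoord.target) := by
    rw [OpenPartialHomeomorph.symm_image_target_eq_source polarCoord]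
    exact hg_int.integrableOn
  have h3 := (integrableOn_image_iff_integrableOn_abs_det_fderiv_smul volume hs hder hinj g).1 h2
  apply h3.congr_fun ?_ hs
  intro p hp
  simp only [B_det, abs_of_pos (mem_Ioi.1 (mem_prod.1 hp).1), polar_symm_eq, hg]
lemma keyK' {c : ℂ} (hc : ‖c‖ < 1) :
    ∫ θ in Ioo (-π) π, Real.log ‖1 - c * Complex.exp (θ * Complex.I)‖ = 0 := by
  rw [← MeasureTheory.integral_Ioc_eq_integral_Ioo,
    ← intervalIntegral.integral_of_le (by linarith [Real.pi_pos] : -π ≤ π)]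
  exact keyK_pi hc

lemma norm_one_sub_pos {w : ℂ} (hw : ‖w‖ < 1) : 0 < ‖1 - w‖ := by
  have := norm_sub_norm_le (1 : ℂ) w
  simp only [norm_one] at this
  linarith

lemma cont_log_norm_one_sub {c : ℂ} (hc : ‖c‖ < 1) :
    Continuous fun θ : ℝ => Real.log ‖1 - c * Complex.exp (θ * Complex.I)‖ := by
  apply Continuous.log
  · continuity
  · intro θ
    have h : ‖c * Complex.exp (θ * Complex.I)‖ < 1 := by
      rw [norm_mul, Complex.norm_exp_ofReal_mul_I, mul_one]; exact hc
    exact (norm_one_sub_pos h).ne'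

lemma integrableOn_log_norm_one_sub {c : ℂ} (hc : ‖c‖ < 1) :
    IntegrableOn (fun θ : ℝ => Real.log ‖1 - c * Complex.exp (θ * Complex.I)‖) (Ioo (-π) π) :=
  (((cont_log_norm_one_sub hc).intervalIntegrable (-π) π).1).mono_set Ioo_subset_Ioc_self

lemma inner_integral_bound {x : ℂ} (hx : ‖x‖ < 1) {ρ : ℝ} (h0 : 0 < ρ) (h1 : ρ < 1)
    (hne : ρ ≠ ‖x‖) :
    ∫ θ in Ioo (-π) π, greenKernel x ((ρ : ℂ) * Complex.exp (θ * Complex.I)) ≤ -Real.log ρ := by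
  have hπ := Real.pi_pos
  have hρC : (ρ : ℂ) ≠ 0 := by exact_mod_cast h0.ne'
  have hnormy : ∀ θ : ℝ, ‖(ρ : ℂ) * Complex.exp (θ * Complex.I)‖ = ρ := fun θ => by
    rw [norm_mul, Complex.norm_exp_ofReal_mul_I, mul_one, Complex.norm_real,
      Real.norm_of_nonneg h0.le]
  -- the conjugate-factor constant
  have hcA : ‖(starRingEnd ℂ x) * (ρ : ℂ)‖ < 1 := by
    rw [norm_mul, RCLike.norm_conj, Complex.norm_real, Real.norm_of_nonneg h0.le]
    nlinarith [norm_nonneg x]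
  -- expansion of the green kernel on the circle
  have hexp : ∀ θ : ℝ, greenKernel x ((ρ : ℂ) * Complex.exp (θ * Complex.I))
      = (1 / (2 * π)) * (Real.log ‖1 - ((starRingEnd ℂ x) * (ρ : ℂ)) * Complex.exp (θ * Complex.I)‖
        - Real.log ‖x - (ρ : ℂ) * Complex.exp (θ * Complex.I)‖) := by
    intro θ
    have ha : ‖1 - ((starRingEnd ℂ x) * (ρ : ℂ)) * Complex.exp (θ * Complex.I)‖ ≠ 0 := by
      refine (norm_one_sub_pos ?_).ne'
      rw [norm_mul, Complex.norm_exp_ofReal_mul_I, mul_one]; exact hcA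
    have hb : ‖x - (ρ : ℂ) * Complex.exp (θ * Complex.I)‖ ≠ 0 := by
      rw [norm_ne_zero_iff, sub_ne_zero]
      intro h
      exact hne (by rw [h]; exact (hnormy θ).symm)
    rw [greenKernel, mul_assoc, Real.log_div (by rwa [mul_assoc] at ha) hb]
  rw [MeasureTheory.setIntegral_congr_fun measurableSet_Ioo (fun θ _ => hexp θ)]
  have intA := integrableOn_log_norm_one_sub (c := (starRingEnd ℂ x) * (ρ : ℂ)) hcA
  have hbpos : ∀ θ : ℝ, 0 < ‖x - (ρ : ℂ) * Complex.exp (θ * Complex.I)‖ := by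
    intro θ
    rw [norm_pos_iff, sub_ne_zero]
    intro h
    exact hne (by rw [h]; exact (hnormy θ).symm)
  have contB : Continuous fun θ : ℝ => Real.log ‖x - (ρ : ℂ) * Complex.exp (θ * Complex.I)‖ := by
    apply Continuous.log
    · continuity
    · exact fun θ => (hbpos θ).ne'
  have intB : IntegrableOn (fun θ : ℝ => Real.log ‖x - (ρ : ℂ) * Complex.exp (θ * Complex.I)‖)
      (Ioo (-π) π) := ((contB.intervalIntegrable (-π) π).1).mono_set Ioo_subset_Ioc_self
  rw [MeasureTheory.integral_const_mul, MeasureTheory.integral_sub intA intB,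
    keyK' hcA, zero_sub]
  -- now bound the B integral from below
  have hvol : (volume (Ioo (-π) π)).toReal = 2 * π := by
    rw [Real.volume_Ioo, ENNReal.toReal_ofReal (by linarith)]
    ring
  have hBlow : 2 * π * Real.log ρ
      ≤ ∫ θ in Ioo (-π) π, Real.log ‖x - (ρ : ℂ) * Complex.exp (θ * Complex.I)‖ := by
    rcases lt_or_gt_of_ne hne with hlt | hgt
    · -- ρ < ‖x‖ : B = 2π log ‖x‖
      have hx0 : x ≠ 0 := by intro h; rw [h] at hlt; simp at hlt; linarith
      have hc2 : ‖(ρ : ℂ) * x⁻¹‖ < 1 := by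
        rw [norm_mul, norm_inv, Complex.norm_real, Real.norm_of_nonneg h0.le]
        rw [mul_inv_lt_iff₀ (norm_pos_iff.mpr hx0), one_mul]
        exact hlt
      have hpt : ∀ θ : ℝ, Real.log ‖x - (ρ : ℂ) * Complex.exp (θ * Complex.I)‖
          = Real.log ‖x‖ + Real.log ‖1 - ((ρ : ℂ) * x⁻¹) * Complex.exp (θ * Complex.I)‖ := by
        intro θ
        have hid : x - (ρ : ℂ) * Complex.exp (θ * Complex.I)
            = x * (1 - ((ρ : ℂ) * x⁻¹) * Complex.exp (θ * Complex.I)) := by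
          have expand : x * (1 - ((ρ : ℂ) * x⁻¹) * Complex.exp (θ * Complex.I))
              = x - (x * x⁻¹) * ((ρ : ℂ) * Complex.exp (θ * Complex.I)) := by ring
          rw [expand, mul_inv_cancel₀ hx0, one_mul]
        have hb2 : ‖1 - ((ρ : ℂ) * x⁻¹) * Complex.exp (θ * Complex.I)‖ ≠ 0 := by
          refine (norm_one_sub_pos ?_).ne'
          rw [norm_mul, Complex.norm_exp_ofReal_mul_I, mul_one]; exact hc2
        rw [hid, norm_mul, Real.log_mul (by simpa using hx0) hb2]
      rw [MeasureTheory.setIntegral_congr_fun measurableSet_Ioo (fun θ _ => hpt θ)]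
      rw [MeasureTheory.integral_add (integrable_const _) (integrableOn_log_norm_one_sub hc2),
        keyK' hc2, add_zero, MeasureTheory.setIntegral_const, measureReal_def, hvol, smul_eq_mul]
      have : Real.log ρ ≤ Real.log ‖x‖ := Real.log_le_log h0 hlt.le
      nlinarith
    · -- ‖x‖ < ρ : B = 2π log ρ
      have hc2 : ‖x * (ρ : ℂ)⁻¹‖ < 1 := by
        rw [norm_mul, norm_inv, Complex.norm_real, Real.norm_of_nonneg h0.le]
        rw [mul_inv_lt_iff₀ h0, one_mul]
        exact hgt
      have hpt : ∀ θ : ℝ, Real.log ‖x - (ρ : ℂ) * Complex.exp (θ * Complex.I)‖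
          = Real.log ρ + Real.log ‖1 - (x * (ρ : ℂ)⁻¹) * Complex.exp (-θ * Complex.I)‖ := by
        intro θ
        have hexpne : Complex.exp (θ * Complex.I) ≠ 0 := Complex.exp_ne_zero _
        have hee : Complex.exp (θ * Complex.I) * Complex.exp (-θ * Complex.I) = 1 := by
          rw [← Complex.exp_add]; ring_nf; exact Complex.exp_zero
        have hid : x - (ρ : ℂ) * Complex.exp (θ * Complex.I)
            = -(((ρ : ℂ) * Complex.exp (θ * Complex.I))
              * (1 - (x * (ρ : ℂ)⁻¹) * Complex.exp (-θ * Complex.I))) := by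
          have expand : -(((ρ : ℂ) * Complex.exp (θ * Complex.I))
              * (1 - (x * (ρ : ℂ)⁻¹) * Complex.exp (-θ * Complex.I)))
              = x * (((ρ : ℂ) * (ρ : ℂ)⁻¹)
                * (Complex.exp (θ * Complex.I) * Complex.exp (-θ * Complex.I)))
                - (ρ : ℂ) * Complex.exp (θ * Complex.I) := by ring
          rw [expand, hee, mul_inv_cancel₀ hρC, one_mul, mul_one]
        have hb2 : ‖1 - (x * (ρ : ℂ)⁻¹) * Complex.exp (-θ * Complex.I)‖ ≠ 0 := by
          refine (norm_one_sub_pos ?_).ne'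
          rw [norm_mul]
          have h1 : ‖Complex.exp (-θ * Complex.I)‖ = 1 := by
            have := Complex.norm_exp_ofReal_mul_I (-θ)
            simpa using this
          rw [h1, mul_one]; exact hc2
        rw [hid, norm_neg, norm_mul, hnormy, Real.log_mul h0.ne' hb2]
      rw [MeasureTheory.setIntegral_congr_fun measurableSet_Ioo (fun θ _ => hpt θ)]
      rw [MeasureTheory.integral_add (integrable_const _) ?_, MeasureTheory.setIntegral_const,
        measureReal_def, hvol, smul_eq_mul]
      · have hzero : ∫ θ in Ioo (-π) π,
            Real.log ‖1 - (x * (ρ : ℂ)⁻¹) * Complex.exp (-θ * Complex.I)‖ = 0 := by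
          have hIoo : ∫ θ in Ioo (-π) π,
              Real.log ‖1 - (x * (ρ : ℂ)⁻¹) * Complex.exp (-θ * Complex.I)‖
              = ∫ θ in (-π)..π, Real.log ‖1 - (x * (ρ : ℂ)⁻¹) * Complex.exp ((-θ : ℝ) * Complex.I)‖ := by
            rw [intervalIntegral.integral_of_le (by linarith : -π ≤ π),
              MeasureTheory.integral_Ioc_eq_integral_Ioo]
            apply MeasureTheory.setIntegral_congr_fun measurableSet_Ioo
            intro θ _
            norm_num
          rw [hIoo, intervalIntegral.integral_comp_neg
            (fun t => Real.log ‖1 - (x * (ρ : ℂ)⁻¹) * Complex.exp ((t : ℝ) * Complex.I)‖), neg_neg]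
          exact keyK_pi hc2
        rw [hzero, add_zero]
      · -- integrability of the composed-with-neg function
        have h := integrableOn_log_norm_one_sub hc2
        have hcont : Continuous fun θ : ℝ =>
            Real.log ‖1 - (x * (ρ : ℂ)⁻¹) * Complex.exp (-θ * Complex.I)‖ := by
          apply Continuous.log
          · continuity
          · intro θ
            refine (norm_one_sub_pos ?_).ne'
            rw [norm_mul]
            have h1 : ‖Complex.exp (-θ * Complex.I)‖ = 1 := by
              have := Complex.norm_exp_ofReal_mul_I (-θ)
              simpa using this
            rw [h1, mul_one]; exact hc2
        exact ((hcont.intervalIntegrable (-π) π).1).mono_set Ioo_subset_Ioc_self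
  have hfinal : -∫ θ in Ioo (-π) π, Real.log ‖x - (ρ : ℂ) * Complex.exp (θ * Complex.I)‖
      ≤ -(2 * π * Real.log ρ) := by linarith
  calc (1 / (2*π)) * -∫ θ in Ioo (-π) π, Real.log ‖x - (ρ : ℂ) * Complex.exp (θ * Complex.I)‖
      ≤ (1 / (2*π)) * -(2 * π * Real.log ρ) := by
        apply mul_le_mul_of_nonneg_left hfinal (by positivity)
    _ = -Real.log ρ := by field_simp
end Auxiliary

section Main

open Set Metric intervalIntegral Real

/-- The estimate `∫_{F_ε} G_D(x,y) dy ≤ C·ε²` from the proof of Proposition 2.1, for the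
unit disc: there is a finite `C` such that for every `x ∈ D₀` and `ε ∈ (0,1]`,
`ε⁻²·∫_{1−ε<|y|<1} G₀(x,y) dy ≤ C`. -/
theorem integral_greenKernel_annulus_le :
    ∃ C : ℝ, ∀ x : ℂ, ‖x‖ < 1 → ∀ ε : ℝ, 0 < ε → ε ≤ 1 →
      (ε ^ 2)⁻¹ * ∫ y in {y : ℂ | 1 - ε < ‖y‖ ∧ ‖y‖ < 1}, greenKernel x y ≤ C := by
  refine ⟨1/2, fun x hx ε hε hε1 => ?_⟩
  have hπ := Real.pi_pos
  set S : Set ℂ := {y : ℂ | 1 - ε < ‖y‖ ∧ ‖y‖ < 1} with hS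
  have hSmeas : MeasurableSet S := by
    have hrw : S = {y : ℂ | 1 - ε < ‖y‖} ∩ {y : ℂ | ‖y‖ < 1} := rfl
    rw [hrw]
    exact ((isOpen_lt continuous_const continuous_norm).measurableSet).inter
      ((isOpen_lt continuous_norm continuous_const).measurableSet)
  by_cases hint : IntegrableOn (greenKernel x) S volume
  swap
  · rw [MeasureTheory.integral_undef hint, mul_zero]; norm_num
  set h : ℂ → ℝ := S.indicator (greenKernel x) with hh
  have hh_int : Integrable h := (integrable_indicator_iff hSmeas).2 hint
  have hF : IntegrableOn (fun p : ℝ × ℝ => p.1 • h (Complex.polarCoord.symm p))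
      polarCoord.target := integrableOn_polar_comp hh_int
  have hFprod : Integrable (fun p : ℝ × ℝ => p.1 • h (Complex.polarCoord.symm p))
      ((volume.restrict (Ioi (0:ℝ))).prod (volume.restrict (Ioo (-π) π))) := by
    rw [Measure.prod_restrict, ← Measure.volume_eq_prod]
    exact hF
  have hmarg : Integrable (fun ρ : ℝ => ∫ θ in Ioo (-π) π, ρ • h (Complex.polarCoord.symm (ρ, θ)))
      (volume.restrict (Ioi (0:ℝ))) := hFprod.integral_prod_left
  set g₀ : ℝ → ℝ := (Ioo (1-ε) 1).indicator (fun ρ => 1 - ρ) with hg₀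
  have hg₀_int : Integrable g₀ (volume.restrict (Ioi (0:ℝ))) := by
    apply Integrable.integrableOn
    apply IntegrableOn.integrable_indicator ?_ measurableSet_Ioo
    exact (((continuous_const.sub continuous_id).intervalIntegrable (1-ε) 1).1).mono_set
      Ioo_subset_Ioc_self
  -- a.e. comparison
  have hae : ∀ᵐ ρ : ℝ ∂(volume.restrict (Ioi (0:ℝ))), ρ ≠ ‖x‖ := by
    apply MeasureTheory.ae_restrict_of_ae
    have h0 : volume ({(‖x‖ : ℝ)} : Set ℝ) = 0 := measure_singleton _
    filter_upwards [MeasureTheory.compl_mem_ae_iff.mpr h0] with ρ hρ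
    simpa using hρ
  have hcomp : (fun ρ : ℝ => ∫ θ in Ioo (-π) π, ρ • h (Complex.polarCoord.symm (ρ, θ)))
      ≤ᵐ[volume.restrict (Ioi (0:ℝ))] g₀ := by
    filter_upwards [hae, MeasureTheory.self_mem_ae_restrict measurableSet_Ioi] with ρ hρx hρpos
    have hρ0 : (0:ℝ) < ρ := hρpos
    have hsymm : ∀ θ : ℝ, Complex.polarCoord.symm (ρ, θ) = (ρ:ℂ) * Complex.exp (θ * Complex.I) := by
      intro θ
      rw [Complex.polarCoord_symm_apply, Complex.exp_mul_I, Complex.ofReal_cos, Complex.ofReal_sin]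
    have hnormy : ∀ θ : ℝ, ‖Complex.polarCoord.symm (ρ, θ)‖ = ρ := by
      intro θ
      rw [Complex.norm_polarCoord_symm]
      exact abs_of_pos hρ0
    by_cases hmem : ρ ∈ Ioo (1-ε) 1
    · have hy : ∀ θ : ℝ, h (Complex.polarCoord.symm (ρ, θ))
          = greenKernel x ((ρ:ℂ) * Complex.exp (θ * Complex.I)) := by
        intro θ
        rw [hh, Set.indicator_of_mem, hsymm θ]
        rw [hS, Set.mem_setOf_eq, hnormy θ]
        exact ⟨hmem.1, hmem.2⟩
      have e4 : ∫ θ in Ioo (-π) π, ρ • h (Complex.polarCoord.symm (ρ, θ))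
          = ρ * ∫ θ in Ioo (-π) π, greenKernel x ((ρ:ℂ) * Complex.exp (θ * Complex.I)) := by
        rw [MeasureTheory.setIntegral_congr_fun measurableSet_Ioo
          (fun θ _ => by rw [hy θ]), MeasureTheory.integral_smul]
        simp
      have hlog := Real.log_le_sub_one_of_pos (inv_pos.2 hρ0)
      rw [Real.log_inv] at hlog
      have hbound := inner_integral_bound hx hρ0 hmem.2 hρx
      have hmul : ρ * ∫ θ in Ioo (-π) π, greenKernel x ((ρ:ℂ) * Complex.exp (θ * Complex.I))
          ≤ ρ * (-Real.log ρ) := mul_le_mul_of_nonneg_left hbound hρ0.le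
      have hfe : ρ * (ρ⁻¹ - 1) = 1 - ρ := by field_simp
      have : ρ * (-Real.log ρ) ≤ 1 - ρ := by nlinarith
      rw [e4, hg₀, Set.indicator_of_mem hmem]
      linarith
    · have hy : ∀ θ : ℝ, ρ • h (Complex.polarCoord.symm (ρ, θ)) = 0 := by
        intro θ
        rw [hh, Set.indicator_of_notMem, smul_zero]
        intro hmem'
        rw [hS, Set.mem_setOf_eq, hnormy θ] at hmem'
        exact hmem ⟨hmem'.1, hmem'.2⟩
      rw [MeasureTheory.setIntegral_congr_fun measurableSet_Ioo (fun θ _ => hy θ),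
        MeasureTheory.integral_zero, hg₀, Set.indicator_of_notMem hmem]
  -- the chain
  have key : ∫ y in S, greenKernel x y ≤ ε^2 / 2 := by
    have e1 : ∫ y in S, greenKernel x y = ∫ y, h y := (MeasureTheory.integral_indicator hSmeas).symm
    have e2 : ∫ y, h y = ∫ p in polarCoord.target, p.1 • h (Complex.polarCoord.symm p) :=
      (Complex.integral_comp_polarCoord_symm h).symm
    have e3 : ∫ p in polarCoord.target, p.1 • h (Complex.polarCoord.symm p)
        = ∫ ρ in Ioi (0:ℝ), ∫ θ in Ioo (-π) π, ρ • h (Complex.polarCoord.symm (ρ, θ)) := by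
      have htar : polarCoord.target = Ioi (0:ℝ) ×ˢ Ioo (-π) π := rfl
      rw [htar, Measure.volume_eq_prod, MeasureTheory.setIntegral_prod]
      rw [← Measure.volume_eq_prod]
      exact hF
    have e5 : ∫ ρ in Ioi (0:ℝ), g₀ ρ = ε^2/2 := by
      rw [hg₀, MeasureTheory.setIntegral_indicator measurableSet_Ioo]
      have hsub : Ioi (0:ℝ) ∩ Ioo (1-ε) 1 = Ioo (1-ε) 1 := by
        apply Set.inter_eq_self_of_subset_right
        intro ρ hρ
        have : (0:ℝ) ≤ 1 - ε := by linarith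
        exact lt_of_le_of_lt this hρ.1
      rw [hsub, ← MeasureTheory.integral_Ioc_eq_integral_Ioo,
        ← intervalIntegral.integral_of_le (by linarith : 1-ε ≤ 1)]
      rw [intervalIntegral.integral_sub intervalIntegrable_const intervalIntegrable_id,
        intervalIntegral.integral_const, integral_id, smul_eq_mul]
      ring
    rw [e1, e2, e3, ← e5]
    exact MeasureTheory.integral_mono_ae hmarg hg₀_int hcomp
  have hε2 : (0:ℝ) < ε^2 := by positivity
  calc (ε ^ 2)⁻¹ * ∫ y in S, greenKernel x y ≤ (ε^2)⁻¹ * (ε^2/2) :=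
        mul_le_mul_of_nonneg_left key (by positivity)
    _ = 1/2 := by field_simp

end Main
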